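/- Every left Z₂-graded finitely generated module over M(n|m) is isomorphic, as a Z₂-graded M(n|m)-module, to M^{r|s}(n|m) := the space of (n+m)×(r+s) complex matrices with the block Z₂-grading, for unique r, s ∈ ℕ₀ with r+s ≥ 1 (plus possibly the zero module); moreover it is a projective module. -/

import Mathlib

noncomputable section

/-- The `ℤ₂`-graded algebra `M(n|m)` of complex `(n+m)×(n+m)` matrices. -/
abbrev GMat (n m : ℕ) := Matrix (Fin (n + m)) (Fin (n + m)) ℂ

/-- The "body" matrix algebra `M_{max n m}(ℂ)`. -/
abbrev BMat (n m : ℕ) := Matrix (Fin (max n m)) (Fin (max n m)) ℂ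

namespace GMat

/-- Block degree of an index: `false` for the first (size `n`) block. -/
def bdeg (n m : ℕ) (i : Fin (n + m)) : Bool := decide (n ≤ i.val)

/-- `M` is homogeneous of degree `ε` (block-diagonal for `ε = false`,
block-off-diagonal for `ε = true`). -/
def IsHomog (n m : ℕ) (ε : Bool) (M : GMat n m) : Prop :=
  ∀ i j, Bool.xor (bdeg n m i) (bdeg n m j) ≠ ε → M i j = 0

/-- The Koszul sign `(-1)^{ab}`. -/
def sgn (a b : Bool) : ℂ := if a && b then -1 else 1

/-- Graded commutator of homogeneous elements of degrees `a`, `b`. -/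
def gcomm {n m : ℕ} (a b : Bool) (A B : GMat n m) : GMat n m := A * B - sgn a b • (B * A)

/-- Graded anticommutator of homogeneous elements of degrees `a`, `b`. -/
def gacomm {n m : ℕ} (a b : Bool) (A B : GMat n m) : GMat n m := A * B + sgn a b • (B * A)

/-- The grading matrix `Γ = diag(1_n, -1_m)`. -/
def Gamma (n m : ℕ) : GMat n m := Matrix.diagonal fun i => if bdeg n m i then -1 else 1

/-- `D` is a graded derivation of `M(n|m)` of degree `ε`. -/
def IsGDer (n m : ℕ) (ε : Bool) (D : GMat n m → GMat n m) : Prop :=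
  (∀ A B, D (A + B) = D A + D B) ∧
  (∀ (c : ℂ) A, D (c • A) = c • D A) ∧
  (∀ (a : Bool) M, IsHomog n m a M → IsHomog n m (Bool.xor a ε) (D M)) ∧
  (∀ (a : Bool) (M M' : GMat n m), IsHomog n m a M →
    D (M * M') = D M * M' + sgn ε a • (M * D M'))

/-- The graded adjoint action `ad E` of a homogeneous matrix `E` of degree `a`:
on homogeneous `M` it is the graded commutator `[E,M]_g`. -/
def gad (n m : ℕ) (a : Bool) (E : GMat n m) : GMat n m → GMat n m :=
  fun M => E * M - (if a then Gamma n m * M * Gamma n m * E else M * E)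

/-- The supertrace `str M = Tr M₁ - Tr M₄`. -/
def str (n m : ℕ) (M : GMat n m) : ℂ :=
  ∑ i, (if bdeg n m i then (-1 : ℂ) else 1) * M i i

end GMat



/-- The column module `M^{r|s}(n|m)`: `(n+m)×q` matrices as a left module
over the matrix ring, with the action given by matrix multiplication. -/
instance matrixColumnModule (N q : ℕ) :
    Module (Matrix (Fin N) (Fin N) ℂ) (Matrix (Fin N) (Fin q) ℂ) :=
  { smul := fun A X => A * X
    one_smul := fun X => Matrix.one_mul X
    mul_smul := fun A B X => Matrix.mul_assoc A B X
    smul_zero := fun A => Matrix.mul_zero A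
    smul_add := fun A X Y => Matrix.mul_add A X Y
    add_smul := fun A B X => Matrix.add_mul A B X
    zero_smul := fun X => Matrix.zero_mul X }

namespace GMat

/-- The grading matrix `diag(1_r, -1_s)` on the column index space. -/
def GammaR (r s : ℕ) : Matrix (Fin (r + s)) (Fin (r + s)) ℂ :=
  Matrix.diagonal fun j => if j.val < r then 1 else -1

end GMat

namespace ClassAux

open Matrix

lemma col_smul_def {N q : ℕ} (A : Matrix (Fin N) (Fin N) ℂ) (X : Matrix (Fin N) (Fin q) ℂ) :
    A • X = A * X := rfl

instance colTower (N q : ℕ) :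
    IsScalarTower ℂ (Matrix (Fin N) (Fin N) ℂ) (Matrix (Fin N) (Fin q) ℂ) :=
  ⟨fun c A X => by
    show (c • A) * X = c • (A * X)
    rw [Matrix.smul_mul]⟩

lemma sum_std_diag (k : ℕ) : ∑ i : Fin k, Matrix.single i i (1:ℂ) = 1 := by
  ext p q
  rw [Matrix.sum_apply]
  simp only [Matrix.single, of_apply, Matrix.one_apply]
  rcases eq_or_ne p q with rfl | hpq
  · simp
  · rw [if_neg hpq]
    refine Finset.sum_eq_zero fun x _ => if_neg ?_
    rintro ⟨rfl, rfl⟩; exact hpq rfl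

lemma gdiag_sq (n m : ℕ) (i : Fin (n+m)) :
    GMat.Gamma n m i i * GMat.Gamma n m i i = 1 := by
  simp only [GMat.Gamma, Matrix.diagonal_apply_eq]
  split_ifs <;> norm_num

lemma Gamma_mul_std_mul_Gamma (n m : ℕ) (i j : Fin (n+m)) :
    GMat.Gamma n m * Matrix.single i j (1:ℂ) * GMat.Gamma n m
      = (GMat.Gamma n m i i * GMat.Gamma n m j j) • Matrix.single i j (1:ℂ) := by
  ext p q
  simp only [GMat.Gamma, Matrix.mul_diagonal, Matrix.diagonal_mul, Matrix.smul_apply,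
    Matrix.single, of_apply, Matrix.diagonal_apply_eq, smul_eq_mul]
  by_cases h : i = p ∧ j = q
  · obtain ⟨rfl, rfl⟩ := h
    rw [if_pos (And.intro rfl rfl)]
    split_ifs <;> ring
  · rw [if_neg h]
    ring

lemma Gamma_sq (n m : ℕ) : GMat.Gamma n m * GMat.Gamma n m = 1 := by
  have h : (fun i : Fin (n+m) =>
      (if GMat.bdeg n m i then (-1:ℂ) else 1) * (if GMat.bdeg n m i then -1 else 1))
      = fun _ => (1:ℂ) := by
    funext i; split_ifs <;> norm_num
  rw [GMat.Gamma, Matrix.diagonal_mul_diagonal, h, Matrix.diagonal_one]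

lemma std_mul_eq_sum (N : ℕ) (z i : Fin N) (A : Matrix (Fin N) (Fin N) ℂ) :
    Matrix.single z i (1:ℂ) * A = ∑ k, A i k • Matrix.single z k (1:ℂ) := by
  ext p q
  rw [Matrix.sum_apply]
  rcases eq_or_ne p z with rfl | hp
  · rw [Matrix.single_mul_apply_same, one_mul]
    simp only [Matrix.smul_apply, Matrix.single, of_apply, smul_eq_mul, mul_ite, mul_one,
      mul_zero, true_and]
    simp
  · rw [Matrix.single_mul_apply_of_ne (1:ℂ) z i p q hp A]
    symm
    refine Finset.sum_eq_zero fun x _ => ?_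
    simp only [Matrix.smul_apply, Matrix.single, of_apply, smul_eq_mul]
    rw [if_neg (by rintro ⟨rfl, rfl⟩; exact hp rfl)]
    simp

lemma diag_conj_apply {N q : ℕ} (d : Fin N → ℂ) (d' : Fin q → ℂ)
    (M : Matrix (Fin N) (Fin q) ℂ) (i : Fin N) (j : Fin q) :
    (Matrix.diagonal d * M * Matrix.diagonal d') i j = d i * M i j * d' j := by
  rw [Matrix.mul_diagonal, Matrix.diagonal_mul]

end ClassAux

/-- Row-0 embedding of `ℂ^r` into `N × (r+s)` matrices. -/
def Lmap (N r s : ℕ) (z : Fin N) : (Fin r → ℂ) →ₗ[ℂ] Matrix (Fin N) (Fin (r + s)) ℂ where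
  toFun u := Matrix.of fun i j => if h : i = z ∧ (j : ℕ) < r then u ⟨j, h.2⟩ else 0
  map_add' u v := by
    ext i j
    simp only [Matrix.of_apply, Matrix.add_apply, Pi.add_apply]
    split_ifs <;> simp
  map_smul' c u := by
    ext i j
    simp only [Matrix.of_apply, Matrix.smul_apply, Pi.smul_apply, RingHom.id_apply, smul_eq_mul]
    split_ifs <;> simp

/-- Extraction of the first `r` entries of row 0. -/
def Pmap (N r s : ℕ) (z : Fin N) : Matrix (Fin N) (Fin (r + s)) ℂ →ₗ[ℂ] (Fin r → ℂ) where
  toFun Y j := Y z (Fin.castAdd s j)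
  map_add' Y Z := by funext j; simp [Matrix.add_apply]
  map_smul' c Y := by funext j; simp [Matrix.smul_apply]

lemma Pmap_Lmap (N r s : ℕ) (z : Fin N) (u : Fin r → ℂ) :
    Pmap N r s z (Lmap N r s z u) = u := by
  funext j
  show (Matrix.of fun i j => if h : i = z ∧ (j : ℕ) < r then u ⟨j, h.2⟩ else 0) z
    (Fin.castAdd s j) = u j
  rw [Matrix.of_apply, dif_pos ⟨rfl, j.isLt⟩]
  exact congrArg u (Fin.ext rfl)

lemma Lmap_Pmap (N r s : ℕ) (z : Fin N) (Y : Matrix (Fin N) (Fin (r + s)) ℂ)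
    (h1 : ∀ i j, i ≠ z → Y i j = 0) (h2 : ∀ j : Fin (r + s), r ≤ (j : ℕ) → Y z j = 0) :
    Lmap N r s z (Pmap N r s z Y) = Y := by
  ext i j
  show (if h : i = z ∧ (j : ℕ) < r then Y z (Fin.castAdd s ⟨(j : ℕ), h.2⟩) else 0) = Y i j
  by_cases h : i = z ∧ (j : ℕ) < r
  · rw [dif_pos h]
    obtain ⟨rfl, hj⟩ := h
    congr 1
  · rw [dif_neg h]
    rcases eq_or_ne i z with rfl | hi
    · have hj : r ≤ (j : ℕ) := by
        by_contra hj
        exact h ⟨rfl, Nat.lt_of_not_le hj⟩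
      exact (h2 j hj).symm
    · exact (h1 i j hi).symm

open ClassAux

lemma std_mul_col {N q : ℕ} (z w : Fin N) (M : Matrix (Fin N) (Fin q) ℂ) (i : Fin N) (j : Fin q) :
    (Matrix.single z w (1:ℂ) * M) i j = if i = z then M w j else 0 := by
  rw [Matrix.mul_apply]
  rcases eq_or_ne i z with rfl | hi
  · rw [if_pos rfl, Finset.sum_eq_single w]
    · simp [Matrix.single]
    · intro k _ hk; simp [Matrix.single, Ne.symm hk]
    · intro h; exact absurd (Finset.mem_univ w) h
  · rw [if_neg hi]
    refine Finset.sum_eq_zero fun k _ => ?_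
    simp [Matrix.single, Ne.symm hi]

lemma Lmap_apply_ne (N r s : ℕ) (z : Fin N) (u : Fin r → ℂ) (i : Fin N) (j : Fin (r+s))
    (hi : i ≠ z) : Lmap N r s z u i j = 0 := by
  show (if h : i = z ∧ (j : ℕ) < r then u ⟨j, h.2⟩ else 0) = 0
  rw [dif_neg (by rintro ⟨rfl, -⟩; exact hi rfl)]

lemma GammaConj_apply (n m r s : ℕ) (M : Matrix (Fin (n+m)) (Fin (r+s)) ℂ)
    (i : Fin (n+m)) (j : Fin (r+s)) :
    (GMat.Gamma n m * M * GMat.GammaR r s) i j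
      = (if GMat.bdeg n m i then (-1:ℂ) else 1) * M i j * (if (j:ℕ) < r then 1 else -1) := by
  rw [GMat.Gamma, GMat.GammaR, ClassAux.diag_conj_apply]

lemma equiv_map_csmul {N q q' : ℕ}
    (f : Matrix (Fin N) (Fin q) ℂ ≃ₗ[Matrix (Fin N) (Fin N) ℂ] Matrix (Fin N) (Fin q') ℂ)
    (c : ℂ) (X : Matrix (Fin N) (Fin q) ℂ) : f (c • X) = c • f X := by
  have h1 : c • X = (c • (1 : Matrix (Fin N) (Fin N) ℂ)) • X := by
    show c • X = (c • (1 : Matrix (Fin N) (Fin N) ℂ)) * X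
    rw [Matrix.smul_mul, Matrix.one_mul]
  rw [h1, map_smul]
  show (c • (1 : Matrix (Fin N) (Fin N) ℂ)) * f X = c • f X
  rw [Matrix.smul_mul, Matrix.one_mul]

lemma Psect (n m r s r' s' : ℕ) (hN : 0 < n + m)
    (f : Matrix (Fin (n+m)) (Fin (r+s)) ℂ ≃ₗ[GMat n m] Matrix (Fin (n+m)) (Fin (r'+s')) ℂ)
    (hf : ∀ X, f (GMat.Gamma n m * X * GMat.GammaR r s)
        = GMat.Gamma n m * f X * GMat.GammaR r' s')
    (u : Fin r → ℂ) :
    Lmap (n+m) r' s' ⟨0, hN⟩ (Pmap (n+m) r' s' ⟨0, hN⟩ (f (Lmap (n+m) r s ⟨0, hN⟩ u)))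
      = f (Lmap (n+m) r s ⟨0, hN⟩ u) := by
  set z : Fin (n+m) := ⟨0, hN⟩ with hz
  set L := Lmap (n+m) r s z u with hL
  set Y := f L with hYdef
  set gz : ℂ := if GMat.bdeg n m z then -1 else 1 with hgz
  have hgz0 : gz ≠ 0 := by rw [hgz]; split_ifs <;> norm_num
  -- row support
  have hstd : Matrix.single z z (1:ℂ) * L = L := by
    ext i j
    rw [std_mul_col]
    rcases eq_or_ne i z with rfl | hi
    · rw [if_pos rfl]
    · rw [if_neg hi, hL, Lmap_apply_ne _ _ _ _ _ _ _ hi]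
  have hrow : ∀ i j, i ≠ z → Y i j = 0 := by
    have hY' : Matrix.single z z (1:ℂ) * Y = Y := by
      rw [hYdef, ← col_smul_def, ← map_smul f, col_smul_def, hstd]
    intro i j hi
    rw [← hY', std_mul_col, if_neg hi]
  -- column support
  have hLg : GMat.Gamma n m * L * GMat.GammaR r s = gz • L := by
    ext i j
    rw [GammaConj_apply, Matrix.smul_apply, smul_eq_mul]
    rcases eq_or_ne i z with rfl | hi
    · by_cases hj : (j : ℕ) < r
      · rw [if_pos hj, ← hgz]; ring
      · have h0 : L z j = 0 := by rw [hL]; exact dif_neg (by rintro ⟨-, hlt⟩; exact hj hlt)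
        rw [h0]; ring
    · rw [hL, Lmap_apply_ne _ _ _ _ _ _ _ hi]; ring
  have hYg : GMat.Gamma n m * Y * GMat.GammaR r' s' = gz • Y := by
    rw [hYdef, ← hf, hLg, equiv_map_csmul]
  have hcol : ∀ j : Fin (r'+s'), r' ≤ (j : ℕ) → Y z j = 0 := by
    intro j hj
    have he := congrFun (congrFun hYg z) j
    rw [GammaConj_apply, Matrix.smul_apply, smul_eq_mul, ← hgz,
      if_neg (Nat.not_lt.mpr hj)] at he
    have h0 : gz * Y z j * 2 = 0 := by linear_combination -he
    rcases mul_eq_zero.mp h0 with h | h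
    · rcases mul_eq_zero.mp h with h | h
      · exact absurd h hgz0
      · exact h
    · norm_num at h
  exact Lmap_Pmap _ _ _ _ _ hrow hcol

lemma pair_unique (n m r s r' s' : ℕ) (hN : 0 < n + m)
    (f : Matrix (Fin (n+m)) (Fin (r+s)) ℂ ≃ₗ[GMat n m] Matrix (Fin (n+m)) (Fin (r'+s')) ℂ)
    (hf : ∀ X, f (GMat.Gamma n m * X * GMat.GammaR r s)
        = GMat.Gamma n m * f X * GMat.GammaR r' s') :
    r = r' ∧ s = s' := by
  have hq : r + s = r' + s' := by
    have hfr := LinearEquiv.finrank_eq (f.restrictScalars ℂ)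
    rw [Module.finrank_matrix, Module.finrank_matrix] at hfr
    simp only [Fintype.card_fin, Module.finrank_self, mul_one] at hfr
    exact Nat.eq_of_mul_eq_mul_left hN hfr
  have hf' : ∀ X, f.symm (GMat.Gamma n m * X * GMat.GammaR r' s')
      = GMat.Gamma n m * f.symm X * GMat.GammaR r s := by
    intro X
    apply f.injective
    rw [f.apply_symm_apply, hf, f.apply_symm_apply]
  have hr : r = r' := by
    let z : Fin (n+m) := ⟨0, hN⟩
    let fC := (f.restrictScalars ℂ : Matrix (Fin (n+m)) (Fin (r+s)) ℂ ≃ₗ[ℂ] _)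
    let Φ : (Fin r → ℂ) →ₗ[ℂ] (Fin r' → ℂ) :=
      (Pmap (n+m) r' s' z) ∘ₗ (fC : _ →ₗ[ℂ] _) ∘ₗ (Lmap (n+m) r s z)
    let Ψ : (Fin r' → ℂ) →ₗ[ℂ] (Fin r → ℂ) :=
      (Pmap (n+m) r s z) ∘ₗ (fC.symm : _ →ₗ[ℂ] _) ∘ₗ (Lmap (n+m) r' s' z)
    have hΨΦ : ∀ u, Ψ (Φ u) = u := by
      intro u
      show Pmap (n+m) r s z (fC.symm (Lmap (n+m) r' s' z
        (Pmap (n+m) r' s' z (fC (Lmap (n+m) r s z u))))) = u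
      have h1 : fC (Lmap (n+m) r s z u) = f (Lmap (n+m) r s z u) := rfl
      have h2 : ∀ X, fC.symm X = f.symm X := fun _ => rfl
      rw [h1, Psect n m r s r' s' hN f hf u, h2, f.symm_apply_apply, Pmap_Lmap]
    have hΦΨ : ∀ u, Φ (Ψ u) = u := by
      intro u
      show Pmap (n+m) r' s' z (fC (Lmap (n+m) r s z
        (Pmap (n+m) r s z (fC.symm (Lmap (n+m) r' s' z u))))) = u
      have h2 : fC.symm (Lmap (n+m) r' s' z u) = f.symm (Lmap (n+m) r' s' z u) := rfl
      have h1 : ∀ X, fC X = f X := fun _ => rfl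
      rw [h2, Psect n m r' s' r s hN f.symm hf' u, h1, f.apply_symm_apply, Pmap_Lmap]
    have equiv : (Fin r → ℂ) ≃ₗ[ℂ] (Fin r' → ℂ) :=
      LinearEquiv.ofLinear Φ Ψ (LinearMap.ext hΦΨ) (LinearMap.ext hΨΦ)
    have hfr := equiv.finrank_eq
    rwa [Module.finrank_fin_fun, Module.finrank_fin_fun] at hfr
  exact ⟨hr, by omega⟩

lemma std_mul_std (p q t : ℕ) (a : Fin p) (b : Fin q) (c : Fin t) :
    Matrix.single a b (1:ℂ) * Matrix.single b c (1:ℂ)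
      = Matrix.single a c (1:ℂ) := by
  ext x y
  rw [Matrix.mul_apply]
  simp only [Matrix.single, Matrix.of_apply]
  rw [Finset.sum_eq_single b]
  · by_cases h1 : a = x <;> by_cases h2 : c = y <;> simp [h1, h2]
  · intro k _ hk
    simp [Ne.symm hk]
  · intro h; exact absurd (Finset.mem_univ b) h

lemma col_projective (N q : ℕ) (hN : 0 < N) :
    Module.Projective (Matrix (Fin N) (Fin N) ℂ) (Matrix (Fin N) (Fin q) ℂ) := by
  let z : Fin N := ⟨0, hN⟩
  let R := Matrix (Fin N) (Fin N) ℂ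
  let ι : Matrix (Fin N) (Fin q) ℂ →ₗ[R] (Fin q → R) :=
    { toFun := fun X j => X * Matrix.single j z (1:ℂ)
      map_add' := fun X Y => by
        funext j
        show (X + Y) * Matrix.single j z (1:ℂ)
          = X * Matrix.single j z (1:ℂ) + Y * Matrix.single j z (1:ℂ)
        rw [Matrix.add_mul]
      map_smul' := fun A X => by
        funext j
        show (A * X) * Matrix.single j z (1:ℂ)
          = A * (X * Matrix.single j z (1:ℂ))
        exact Matrix.mul_assoc A X _ }
  let sec : (Fin q → R) →ₗ[R] Matrix (Fin N) (Fin q) ℂ :=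
    { toFun := fun Y => ∑ j, Y j * Matrix.single z j (1:ℂ)
      map_add' := fun X Y => by
        show ∑ j, (X j + Y j) * Matrix.single z j (1:ℂ)
          = (∑ j, X j * Matrix.single z j (1:ℂ))
            + ∑ j, Y j * Matrix.single z j (1:ℂ)
        rw [← Finset.sum_add_distrib]
        exact Finset.sum_congr rfl fun j _ => Matrix.add_mul _ _ _
      map_smul' := fun A Y => by
        show ∑ j, (A * Y j) * Matrix.single z j (1:ℂ)
          = A * ∑ j, Y j * Matrix.single z j (1:ℂ)
        rw [Matrix.mul_sum]
        exact Finset.sum_congr rfl fun j _ => Matrix.mul_assoc _ _ _ }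
  apply Module.Projective.of_split ι sec
  apply LinearMap.ext
  intro X
  show ∑ j, ((X * (Matrix.single j z (1:ℂ) : Matrix (Fin q) (Fin N) ℂ))
    * (Matrix.single z j (1:ℂ) : Matrix (Fin N) (Fin q) ℂ) : Matrix (Fin N) (Fin q) ℂ) = X
  have h : ∀ j : Fin q, (X * Matrix.single j z (1:ℂ)) * Matrix.single z j (1:ℂ)
      = X * Matrix.single j j (1:ℂ) := by
    intro j
    rw [Matrix.mul_assoc]
    congr 1
    exact std_mul_std q N q j z j
  rw [Finset.sum_congr rfl fun j _ => h j, ← Matrix.mul_sum, ClassAux.sum_std_diag,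
    Matrix.mul_one]

theorem exists_graded_equiv (n m : ℕ) (hN : 0 < n + m) (V : Type) [AddCommGroup V]
    [Module ℂ V] [Module (GMat n m) V] [IsScalarTower ℂ (GMat n m) V]
    [Module.Finite (GMat n m) V]
    (γ : V →ₗ[ℂ] V) (hinv : ∀ v, γ (γ v) = v)
    (hcomp : ∀ (A : GMat n m) (v : V),
      γ (A • v) = (GMat.Gamma n m * A * GMat.Gamma n m) • γ v) :
    ∃ r s : ℕ, ∃ e : V ≃ₗ[GMat n m] Matrix (Fin (n + m)) (Fin (r + s)) ℂ,
      ∀ v : V, e (γ v) = GMat.Gamma n m * e v * GMat.GammaR r s := by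
  haveI : Module.Finite ℂ V := Module.Finite.trans (GMat n m) V
  let z : Fin (n + m) := ⟨0, hN⟩
  let P0 : GMat n m := Matrix.single z z (1:ℂ)
  let Ei : Fin (n+m) → GMat n m := fun i => Matrix.single z i (1:ℂ)
  let Fi : Fin (n+m) → GMat n m := fun i => Matrix.single i z (1:ℂ)
  let g : Fin (n+m) → ℂ := fun i => if GMat.bdeg n m i then -1 else 1
  have hg2 : ∀ i, g i * g i = 1 := fun i => by
    show (if GMat.bdeg n m i then (-1:ℂ) else 1) * (if GMat.bdeg n m i then -1 else 1) = 1
    split_ifs <;> norm_num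
  let ε : ℂ := g z
  have hε2 : ε * ε = 1 := hg2 z
  have hgam : ∀ i j : Fin (n+m), GMat.Gamma n m * Matrix.single i j (1:ℂ) *
      GMat.Gamma n m = (g i * g j) • Matrix.single i j (1:ℂ) := by
    intro i j
    have h := ClassAux.Gamma_mul_std_mul_Gamma n m i j
    have h1 : GMat.Gamma n m i i = g i := by rw [GMat.Gamma]; exact Matrix.diagonal_apply_eq _ i
    have h2 : GMat.Gamma n m j j = g j := by rw [GMat.Gamma]; exact Matrix.diagonal_apply_eq _ j
    rwa [h1, h2] at h
  have hstdγ : ∀ (i j : Fin (n+m)) (v : V),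
      γ (Matrix.single i j (1:ℂ) • v)
        = (g i * g j) • (Matrix.single i j (1:ℂ) • γ v) := by
    intro i j v
    rw [hcomp, hgam, smul_assoc]
  have hP0γ : ∀ v, γ (P0 • v) = P0 • γ v := by
    intro v
    have := hstdγ z z v
    rwa [hg2 z, one_smul] at this
  have hP0P0 : ∀ v : V, P0 • (P0 • v) = P0 • v := by
    intro v
    rw [← mul_smul]
    congr 1
    exact std_mul_std _ _ _ z z z
  let actE : V →ₗ[ℂ] V :=
    { toFun := fun v => P0 • v
      map_add' := fun a b => smul_add P0 a b
      map_smul' := fun c v => (smul_comm c P0 v).symm }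
  let W : Submodule ℂ V := LinearMap.eqLocus actE LinearMap.id
  have hmemW : ∀ v : V, v ∈ W ↔ P0 • v = v := fun v => Iff.rfl
  let δ : V →ₗ[ℂ] V := ε • γ
  have hδ : ∀ v, δ v = ε • γ v := fun v => rfl
  have hγδ : ∀ v, γ v = ε • δ v := by
    intro v; rw [hδ, smul_smul, hε2, one_smul]
  have hδδ : ∀ v, δ (δ v) = v := by
    intro v
    rw [hδ, hδ, map_smul, smul_smul, hε2, one_smul, hinv]
  have hWδ : ∀ w ∈ W, δ w ∈ W := by
    intro w hw
    rw [hmemW] at hw ⊢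
    rw [hδ]
    calc P0 • (ε • γ w) = ε • (P0 • γ w) := smul_comm _ _ _
      _ = ε • γ (P0 • w) := by rw [hP0γ]
      _ = ε • γ w := by rw [hw]
  let δW : ↥W →ₗ[ℂ] ↥W := δ.restrict hWδ
  have hδW : ∀ (w : ↥W), ((δW w : ↥W) : V) = δ (w : V) := fun w => rfl
  have hδWδW : ∀ x : ↥W, δW (δW x) = x := fun x => Subtype.ext (by
    rw [hδW, hδW, hδδ])
  let A : Submodule ℂ ↥W := LinearMap.eqLocus δW LinearMap.id
  let B : Submodule ℂ ↥W := LinearMap.eqLocus δW (-LinearMap.id)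
  have hAB : IsCompl A B := by
    constructor
    · rw [disjoint_iff_inf_le]
      rintro x ⟨hxA, hxB⟩
      have h1 : δW x = x := hxA
      have h2 : δW x = -x := hxB
      have hx : x + x = 0 := add_eq_zero_iff_eq_neg.mpr (h1.symm.trans h2)
      have h2x : (2:ℂ) • x = 0 := by rw [two_smul]; exact hx
      rcases smul_eq_zero.mp h2x with h | h
      · norm_num at h
      · simp [h]
    · rw [codisjoint_iff, eq_top_iff]
      intro x _
      have hxy : x = (2:ℂ)⁻¹ • (x + δW x) + (2:ℂ)⁻¹ • (x - δW x) := by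
        rw [← smul_add]
        have h : (x + δW x) + (x - δW x) = (2:ℂ) • x := by rw [two_smul]; abel
        rw [h, smul_smul]
        norm_num
      rw [hxy]
      refine Submodule.add_mem_sup (Submodule.smul_mem _ _ ?_) (Submodule.smul_mem _ _ ?_)
      · show δW (x + δW x) = LinearMap.id (x + δW x)
        rw [map_add, hδWδW]
        show δW x + x = x + δW x
        abel
      · show δW (x - δW x) = (-LinearMap.id) (x - δW x)
        rw [map_sub, hδWδW]
        show δW x - x = -(x - δW x)
        abel
  let r := Module.finrank ℂ ↥A
  let s := Module.finrank ℂ ↥B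
  let bA : Module.Basis (Fin r) ℂ ↥A := Module.finBasis ℂ ↥A
  let bB : Module.Basis (Fin s) ℂ ↥B := Module.finBasis ℂ ↥B
  let bW : Module.Basis (Fin (r + s)) ℂ ↥W :=
    ((bA.prod bB).map (Submodule.prodEquivOfIsCompl A B hAB)).reindex finSumFinEquiv
  let σ : Fin (r+s) → ℂ := fun j => if (j : ℕ) < r then 1 else -1
  have key1 : ∀ j, δW (bW j) = σ j • bW j := by
    intro j
    have hbW : bW j = Submodule.prodEquivOfIsCompl A B hAB
        ((bA.prod bB) (finSumFinEquiv.symm j)) := by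
      show ((bA.prod bB).map (Submodule.prodEquivOfIsCompl A B hAB)).reindex finSumFinEquiv j = _
      rw [Module.Basis.reindex_apply, Module.Basis.map_apply]
    rcases hsj : finSumFinEquiv.symm j with a | b
    · have hj : (j : ℕ) < r := by
        have hja : j = finSumFinEquiv (Sum.inl a) := by rw [← hsj, Equiv.apply_symm_apply]
        rw [hja, finSumFinEquiv_apply_left]
        exact a.isLt
      have hprod : (bA.prod bB) (Sum.inl a) = (bA a, 0) :=
        Prod.ext (Module.Basis.prod_apply_inl_fst _ _ _) (Module.Basis.prod_apply_inl_snd _ _ _)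
      have hval : bW j = ((bA a : ↥W)) := by
        rw [hbW, hsj, hprod, Submodule.coe_prodEquivOfIsCompl']
        simp
      have hmem : (bW j) ∈ A := by rw [hval]; exact (bA a).2
      have : δW (bW j) = bW j := LinearMap.mem_eqLocus.mp hmem
      rw [this]
      show bW j = σ j • bW j
      rw [show σ j = 1 from if_pos hj, one_smul]
    · have hj : ¬ ((j : ℕ) < r) := by
        have hjb : j = finSumFinEquiv (Sum.inr b) := by rw [← hsj, Equiv.apply_symm_apply]
        rw [hjb, finSumFinEquiv_apply_right]
        simp [Fin.natAdd]
      have hprod : (bA.prod bB) (Sum.inr b) = (0, bB b) :=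
        Prod.ext (Module.Basis.prod_apply_inr_fst _ _ _) (Module.Basis.prod_apply_inr_snd _ _ _)
      have hval : bW j = ((bB b : ↥W)) := by
        rw [hbW, hsj, hprod, Submodule.coe_prodEquivOfIsCompl']
        simp
      have hmem : (bW j) ∈ B := by rw [hval]; exact (bB b).2
      have : δW (bW j) = -(bW j) := LinearMap.mem_eqLocus.mp hmem
      rw [this]
      show -(bW j) = σ j • bW j
      rw [show σ j = -1 from if_neg hj, neg_one_smul]
  have key2 : ∀ (w : ↥W) (j), (bW.repr (δW w)) j = σ j * (bW.repr w) j := by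
    intro w j
    have heq : (Finsupp.lapply j : (Fin (r+s) →₀ ℂ) →ₗ[ℂ] ℂ) ∘ₗ (bW.repr.toLinearMap ∘ₗ δW)
        = σ j • ((Finsupp.lapply j : (Fin (r+s) →₀ ℂ) →ₗ[ℂ] ℂ) ∘ₗ bW.repr.toLinearMap) := by
      apply bW.ext
      intro k
      simp only [LinearMap.comp_apply, LinearMap.smul_apply, Finsupp.lapply_apply,
        LinearEquiv.coe_coe]
      rw [key1 k, map_smul, Module.Basis.repr_self]
      rw [Finsupp.smul_apply, smul_eq_mul, smul_eq_mul]
      rcases eq_or_ne k j with rfl | hkj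
      · rw [Finsupp.single_eq_same]
      · rw [Finsupp.single_eq_of_ne hkj.symm, mul_zero, mul_zero]
    have h := LinearMap.congr_fun heq w
    simpa using h
  -- projection onto W
  have hP0memW : ∀ v : V, actE v ∈ W := by
    intro v
    rw [hmemW]
    exact hP0P0 v
  let πW : V →ₗ[ℂ] ↥W := LinearMap.codRestrict W actE hP0memW
  have hπW : ∀ v : V, ((πW v : ↥W) : V) = P0 • v := fun v => rfl
  have hπWof : ∀ w : ↥W, πW (w : V) = w := by
    intro w
    apply Subtype.ext
    rw [hπW]
    exact (hmemW _).mp w.2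
  let ℓmap : V →ₗ[ℂ] (Fin (r+s) →₀ ℂ) := bW.repr.toLinearMap ∘ₗ πW
  let ℓ : V → Fin (r+s) → ℂ := fun v j => ℓmap v j
  have hℓ : ∀ v j, ℓ v j = bW.repr (πW v) j := fun v j => rfl
  let u : Fin (r+s) → V := fun j => ((bW j : ↥W) : V)
  have hu_mem : ∀ j, P0 • u j = u j := fun j => (hmemW _).mp (bW j).2
  have hπu : ∀ j, πW (u j) = bW j := fun j => hπWof (bW j)
  have hrecon : ∀ v : V, ∑ j, ℓ v j • u j = P0 • v := by
    intro v
    have hb := bW.sum_repr (πW v)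
    calc ∑ j, ℓ v j • u j = W.subtype (∑ j, bW.repr (πW v) j • bW j) := by
          rw [map_sum]
          exact Finset.sum_congr rfl fun j _ => by rw [map_smul]; rfl
      _ = W.subtype (πW v) := by rw [hb]
      _ = P0 • v := rfl
  let eFun : V → Matrix (Fin (n+m)) (Fin (r+s)) ℂ :=
    fun v => Matrix.of fun i j => ℓ (Ei i • v) j
  have heF : ∀ v i j, eFun v i j = ℓ (Ei i • v) j := fun v i j => rfl
  let ψ : Matrix (Fin (n+m)) (Fin (r+s)) ℂ → V := fun X => ∑ i, ∑ j, X i j • (Fi i • u j)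
  -- left inverse
  have hψe : ∀ v, ψ (eFun v) = v := by
    intro v
    have h1 : ∀ i : Fin (n+m), ∑ j, (ℓ (Ei i • v) j) • (Fi i • u j)
        = Fi i • (P0 • (Ei i • v)) := by
      intro i
      calc ∑ j, ℓ (Ei i • v) j • (Fi i • u j)
          = ∑ j, Fi i • (ℓ (Ei i • v) j • u j) :=
            Finset.sum_congr rfl fun j _ => smul_comm _ _ _
        _ = Fi i • ∑ j, ℓ (Ei i • v) j • u j := (Finset.smul_sum).symm
        _ = Fi i • (P0 • (Ei i • v)) := by rw [hrecon]
    have h2 : ∀ i, Fi i • (P0 • (Ei i • v)) = Matrix.single i i (1:ℂ) • v := by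
      intro i
      rw [← mul_smul, ← mul_smul]
      congr 1
      calc Fi i * P0 * Ei i = Matrix.single i z (1:ℂ) * Ei i := by
            congr 1
            exact std_mul_std _ _ _ i z z
        _ = Matrix.single i i (1:ℂ) := std_mul_std _ _ _ i z i
    calc ψ (eFun v) = ∑ i : Fin (n+m), Matrix.single i i (1:ℂ) • v := by
          refine Finset.sum_congr rfl fun i _ => ?_
          rw [← h2 i, ← h1 i]
          rfl
      _ = (∑ i : Fin (n+m), Matrix.single i i (1:ℂ)) • v := (Finset.sum_smul).symm
      _ = v := by rw [ClassAux.sum_std_diag, one_smul]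
  -- right inverse
  have hEF : ∀ i k : Fin (n+m), Ei i * Fi k = if i = k then P0 else 0 := by
    intro i k
    rcases eq_or_ne i k with rfl | hik
    · rw [if_pos rfl]
      exact std_mul_std _ _ _ z i z
    · rw [if_neg hik]
      exact Matrix.single_mul_single_of_ne (1:ℂ) z i k hik (1:ℂ)
  have heψ : ∀ X, eFun (ψ X) = X := by
    intro X
    ext i j
    have h1 : Ei i • ψ X = ∑ l, X i l • u l := by
      show Ei i • ∑ k, ∑ l, X k l • (Fi k • u l) = _
      rw [Finset.smul_sum]
      have hterm : ∀ k, Ei i • ∑ l, X k l • (Fi k • u l)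
          = if i = k then ∑ l, X k l • (P0 • u l) else 0 := by
        intro k
        rw [Finset.smul_sum]
        rcases eq_or_ne i k with rfl | hik
        · rw [if_pos rfl]
          refine Finset.sum_congr rfl fun l _ => ?_
          rw [smul_comm, ← mul_smul, hEF, if_pos rfl]
        · rw [if_neg hik]
          refine Finset.sum_eq_zero fun l _ => ?_
          rw [smul_comm, ← mul_smul, hEF, if_neg hik, zero_smul, smul_zero]
      rw [Finset.sum_congr rfl fun k _ => hterm k, Finset.sum_ite_eq, if_pos (Finset.mem_univ i)]
      exact Finset.sum_congr rfl fun l _ => by rw [hu_mem l]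
    show ℓ (Ei i • ψ X) j = X i j
    rw [hℓ, h1, map_sum]
    have h2 : ∀ l, πW (X i l • u l) = X i l • bW l := by
      intro l
      rw [map_smul, hπu]
    rw [Finset.sum_congr rfl fun l _ => h2 l, map_sum]
    have h3 : ∀ l, bW.repr (X i l • bW l) = X i l • Finsupp.single l 1 := by
      intro l
      rw [map_smul, Module.Basis.repr_self]
    rw [Finset.sum_congr rfl fun l _ => h3 l, Finsupp.finset_sum_apply]
    rw [Finset.sum_eq_single j]
    · rw [Finsupp.smul_apply, Finsupp.single_eq_same, smul_eq_mul, mul_one]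
    · intro l _ hl
      rw [Finsupp.smul_apply, Finsupp.single_eq_of_ne hl.symm, smul_zero]
    · intro h
      exact absurd (Finset.mem_univ j) h
  -- additivity and R-linearity
  have hadd : ∀ v w, eFun (v + w) = eFun v + eFun w := by
    intro v w
    ext i j
    show ℓ (Ei i • (v + w)) j = ℓ (Ei i • v) j + ℓ (Ei i • w) j
    rw [hℓ, hℓ, hℓ, smul_add, map_add, map_add, Finsupp.add_apply]
  have hsmul : ∀ (Amat : GMat n m) v, eFun (Amat • v) = Amat * eFun v := by
    intro Amat v
    ext i j
    show ℓ (Ei i • (Amat • v)) j = (Amat * eFun v) i j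
    rw [Matrix.mul_apply]
    have h1 : Ei i • (Amat • v) = ∑ k, Amat i k • (Ei k • v) := by
      rw [← mul_smul]
      have h2 : Ei i * Amat = ∑ k, Amat i k • Matrix.single z k (1:ℂ) :=
        ClassAux.std_mul_eq_sum (n+m) z i Amat
      rw [h2, Finset.sum_smul]
      exact Finset.sum_congr rfl fun k _ => smul_assoc _ _ _
    rw [hℓ, h1, map_sum]
    have h2 : ∀ k, πW (Amat i k • (Ei k • v)) = Amat i k • πW (Ei k • v) := fun k => map_smul _ _ _
    rw [Finset.sum_congr rfl fun k _ => h2 k, map_sum]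
    have h3 : ∀ k, bW.repr (Amat i k • πW (Ei k • v)) = Amat i k • bW.repr (πW (Ei k • v)) :=
      fun k => map_smul _ _ _
    rw [Finset.sum_congr rfl fun k _ => h3 k, Finsupp.finset_sum_apply]
    exact Finset.sum_congr rfl fun k _ => by rw [Finsupp.smul_apply, smul_eq_mul]; rfl
  -- graded compatibility
  have hgrade : ∀ v, eFun (γ v) = GMat.Gamma n m * eFun v * GMat.GammaR r s := by
    intro v
    ext i j
    rw [GammaConj_apply]
    have hgi : (if GMat.bdeg n m i then (-1:ℂ) else 1) = g i := rfl
    have hσj : (if (j:ℕ) < r then (1:ℂ) else -1) = σ j := rfl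
    rw [hgi, hσj]
    have hs1 : Ei i • γ v = (ε * g i) • γ (Ei i • v) := by
      have h := hstdγ z i v
      have hsq : (ε * g i) * (g z * g i) = 1 := by
        have h1 := hg2 z
        have h2 := hg2 i
        calc (ε * g i) * (g z * g i) = (g z * g z) * (g i * g i) := by ring
          _ = 1 := by rw [h1, h2, one_mul]
      calc Ei i • γ v = ((ε * g i) * (g z * g i)) • (Ei i • γ v) := by rw [hsq, one_smul]
        _ = (ε * g i) • ((g z * g i) • (Ei i • γ v)) := by rw [← smul_smul]
        _ = (ε * g i) • γ (Ei i • v) := by rw [← h]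
    show ℓ (Ei i • γ v) j = g i * eFun v i j * σ j
    rw [hℓ, hs1]
    have hw : P0 • (Ei i • v) = Ei i • v := by
      rw [← mul_smul]
      congr 1
      exact std_mul_std _ _ _ z z i
    have hwmem : (Ei i • v) ∈ W := (hmemW _).mpr hw
    have hδwmem : δ (Ei i • v) ∈ W := hWδ _ hwmem
    have hπδ : πW (δ (Ei i • v)) = δW (πW (Ei i • v)) := by
      apply Subtype.ext
      rw [hπW, hδW]
      show P0 • δ (Ei i • v) = δ ((πW (Ei i • v) : ↥W) : V)
      rw [hπW, hw]
      exact (hmemW _).mp hδwmem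
    rw [map_smul, map_smul, Finsupp.smul_apply, smul_eq_mul]
    rw [hγδ (Ei i • v), map_smul, map_smul, Finsupp.smul_apply, smul_eq_mul]
    rw [hπδ, key2]
    have hfin : eFun v i j = (bW.repr (πW (Ei i • v))) j := rfl
    rw [hfin]
    linear_combination (g i * σ j * (bW.repr (πW (Ei i • v))) j) * hε2
  let e : V ≃ₗ[GMat n m] Matrix (Fin (n+m)) (Fin (r+s)) ℂ :=
    { toFun := eFun
      map_add' := hadd
      map_smul' := fun Amat v => by
        show eFun (Amat • v) = Amat • eFun v
        rw [hsmul]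
        rfl
      invFun := ψ
      left_inv := hψe
      right_inv := heψ }
  exact ⟨r, s, e, hgrade⟩

/-- Every left `ℤ₂`-graded finitely generated module over `M(n|m)` (`n ≠ m`),
with grading recorded by an additive involution `γ` compatible with the
grading of `M(n|m)`, is isomorphic as a graded module to `M^{r|s}(n|m)` (the
`(n+m)×(r+s)` matrices with block grading and standard grading involution
`X ↦ Γ X Γ_{r,s}`) for a unique pair `(r,s)` (the pair `(0,0)` corresponding
to the zero module); moreover it is projective. -/

theorem graded_module_classification (n m : ℕ) (hnm : n ≠ m)
    (V : Type) [AddCommGroup V] [Module (GMat n m) V]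
    [Module.Finite (GMat n m) V]
    (γ : V → V)
    (hadd : ∀ v w : V, γ (v + w) = γ v + γ w)
    (hinv : ∀ v : V, γ (γ v) = v)
    (hcomp : ∀ (A : GMat n m) (v : V),
      γ (A • v) = (GMat.Gamma n m * A * GMat.Gamma n m) • γ v) :
    (∃! rs : ℕ × ℕ, Nonempty
      {e : V ≃ₗ[GMat n m] Matrix (Fin (n + m)) (Fin (rs.1 + rs.2)) ℂ //
        ∀ v : V, e (γ v) = GMat.Gamma n m * e v * GMat.GammaR rs.1 rs.2}) ∧
    Module.Projective (GMat n m) V := by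
  have hN : 0 < n + m := by omega
  letI : Module ℂ V := Module.compHom V (algebraMap ℂ (GMat n m))
  haveI : IsScalarTower ℂ (GMat n m) V := ⟨fun c A v => by
    show (c • A) • v = algebraMap ℂ (GMat n m) c • (A • v)
    rw [Algebra.smul_def, mul_smul]⟩
  have hγsm : ∀ (c : ℂ) (v : V), γ (c • v) = c • γ v := by
    intro c v
    show γ (algebraMap ℂ (GMat n m) c • v) = algebraMap ℂ (GMat n m) c • γ v
    rw [hcomp]
    congr 1
    rw [Algebra.algebraMap_eq_smul_one, Matrix.mul_smul, Matrix.mul_one, Matrix.smul_mul,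
      ClassAux.Gamma_sq]
  let γL : V →ₗ[ℂ] V := { toFun := γ, map_add' := hadd, map_smul' := hγsm }
  obtain ⟨r, s, e, he⟩ := exists_graded_equiv n m hN V γL hinv hcomp
  constructor
  · refine ⟨(r, s), ⟨⟨e, he⟩⟩, ?_⟩
    rintro ⟨r', s'⟩ ⟨⟨e', he'⟩⟩
    have hf : ∀ X, (e'.symm.trans e) (GMat.Gamma n m * X * GMat.GammaR r' s')
        = GMat.Gamma n m * (e'.symm.trans e) X * GMat.GammaR r s := by
      intro X
      have h1 : γ (e'.symm X) = e'.symm (GMat.Gamma n m * X * GMat.GammaR r' s') := by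
        apply e'.injective
        rw [he' (e'.symm X), e'.apply_symm_apply, e'.apply_symm_apply]
      show e (e'.symm (GMat.Gamma n m * X * GMat.GammaR r' s')) = _
      rw [← h1]
      exact he (e'.symm X)
    obtain ⟨h1, h2⟩ := pair_unique n m r' s' r s hN (e'.symm.trans e) hf
    exact Prod.ext h1 h2
  · haveI hproj := col_projective (n+m) (r+s) hN
    exact Module.Projective.of_equiv e.symm

end
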